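/- Let h : {1,…,n} → {1,…,n} be a Hessenberg function, and let R_h be the Hessenberg GKM ring. Then R_h is a ℂ[t_1,…,t_n]-subalgebra of the product ring ∏_{v∈S_n} ℂ[t_1,…,t_n], and the dot action preserves R_h: for every u ∈ S_n and p ∈ R_h, the tuple u·p defined by (u·p)(v) = u(p(u⁻¹v)) again lies in R_h; this defines a left action of S_n on R_h by twisted ℂ[t_1,…,t_n]-algebra automorphisms. -/

import Mathlib

open MvPolynomial Equiv Finset

noncomputable section

/-- The polynomial ring ℂ[t₁,…,tₙ]. -/
abbrev Pol (n : ℕ) : Type := MvPolynomial (Fin n) ℂ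

/-- The action of a permutation `w` on polynomials by the substitution `tᵢ ↦ t_{w(i)}`. -/
def pact {n : ℕ} (w : Perm (Fin n)) (f : Pol n) : Pol n := rename ⇑w f

/-- The GKM condition defining `R ⊆ ∏_{v ∈ Sₙ} ℂ[t₁,…,tₙ]`: for every `v` and every
transposition `(i j)` with `i < j`, the difference `p(v) − p((i j)v)` is divisible by
`tᵢ − tⱼ`. -/
def GKM (n : ℕ) (p : Perm (Fin n) → Pol n) : Prop :=
  ∀ (v : Perm (Fin n)) (i j : Fin n), i < j →
    (X i - X j : Pol n) ∣ (p v - p (Equiv.swap i j * v))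

/-- The length of a permutation: its number of inversions. -/
def len {n : ℕ} (w : Perm (Fin n)) : ℕ :=
  (Finset.univ.filter fun q : Fin n × Fin n => q.1 < q.2 ∧ w q.2 < w q.1).card

/-- Bruhat order: the partial order generated by `u < (i j) u` whenever `ℓ(u) < ℓ((i j)u)`. -/
def bruhatLE {n : ℕ} : Perm (Fin n) → Perm (Fin n) → Prop :=
  Relation.ReflTransGen
    (fun u v => (∃ i j : Fin n, i < j ∧ v = Equiv.swap i j * u) ∧ len u < len v)

/-- `p` is the canonical class (equivariant Schubert class) of `w`:
(i) each component is homogeneous of degree `ℓ(w)`; (ii) `p(v) = 0` unless `v ≥ w` in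
Bruhat order; (iii) `p(w) = ∏ (tᵢ − tⱼ)` over pairs `i < j` with `ℓ((i j)w) < ℓ(w)`;
and `p` satisfies the GKM conditions. -/
def IsCanonical {n : ℕ} (w : Perm (Fin n)) (p : Perm (Fin n) → Pol n) : Prop :=
  GKM n p ∧
  (∀ v, (p v).IsHomogeneous (len w)) ∧
  (∀ v, ¬ bruhatLE w v → p v = 0) ∧
  p w = ∏ q ∈ Finset.univ.filter
      (fun q : Fin n × Fin n => q.1 < q.2 ∧ len (Equiv.swap q.1 q.2 * w) < len w),
      (X q.1 - X q.2 : Pol n)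

/-- The simple transposition `sᵢ = (i, i+1)`. -/
def sT (n i : ℕ) (h : i + 1 < n) : Perm (Fin n) :=
  Equiv.swap ⟨i, Nat.lt_of_succ_lt h⟩ ⟨i + 1, h⟩

/-- The dot (left) action: `(w·p)(v) = w(p(w⁻¹ v))`. -/
def dot {n : ℕ} (w : Perm (Fin n)) (p : Perm (Fin n) → Pol n) : Perm (Fin n) → Pol n :=
  fun v => pact w (p (w⁻¹ * v))

/-- The star (right) action: `(p * w)(v) = p(vw)`. -/
def starAct {n : ℕ} (p : Perm (Fin n) → Pol n) (w : Perm (Fin n)) :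
    Perm (Fin n) → Pol n :=
  fun v => p (v * w)

/-- `R` as a `ℂ[t₁,…,tₙ]`-submodule of the product. -/
def gkmSubmodule (n : ℕ) : Submodule (Pol n) (Perm (Fin n) → Pol n) where
  carrier := {p | GKM n p}
  add_mem' := by
    intro a b ha hb v i j hij
    have h := dvd_add (ha v i j hij) (hb v i j hij)
    simpa [Pi.add_apply, add_sub_add_comm] using h
  zero_mem' := by
    intro v i j hij
    simp
  smul_mem' := by
    intro c p hp v i j hij
    have h := (hp v i j hij).mul_left c
    simpa [Pi.smul_apply, smul_eq_mul, mul_sub] using h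

/-- The maximal ideal `𝔪 = (t₁,…,tₙ) ⊆ ℂ[t₁,…,tₙ]`. -/
def mIdeal (n : ℕ) : Ideal (Pol n) := Ideal.span (Set.range (X : Fin n → Pol n))

/-- The submodule `𝔪R`: finite sums of products `c • p` with `c ∈ 𝔪` and `p ∈ R`. -/
def mR (n : ℕ) : Submodule (Pol n) (Perm (Fin n) → Pol n) :=
  Submodule.span (Pol n) {q | ∃ c ∈ mIdeal n, ∃ p, GKM n p ∧ q = c • p}

/-- The GKM condition for the moment graph of the regular semisimple Hessenberg variety
`X_h`: there is an edge between `v` and `(i j)v` iff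
`max(v⁻¹(i), v⁻¹(j)) ≤ h(min(v⁻¹(i), v⁻¹(j)))`. -/
def GKMh (n : ℕ) (h : Fin n → Fin n) (p : Perm (Fin n) → Pol n) : Prop :=
  ∀ (v : Perm (Fin n)) (i j : Fin n), i < j →
    max (v⁻¹ i) (v⁻¹ j) ≤ h (min (v⁻¹ i) (v⁻¹ j)) →
    (X i - X j : Pol n) ∣ (p v - p (Equiv.swap i j * v))

lemma dot_dot {n : ℕ} (u w : Perm (Fin n)) (p : Perm (Fin n) → Pol n) :
    dot u (dot w p) = dot (u * w) p := by
  funext v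
  simp only [dot, pact, rename_rename]
  rw [mul_inv_rev, mul_assoc]
  rfl

lemma dot_one {n : ℕ} (p : Perm (Fin n) → Pol n) : dot 1 p = p := by
  funext v
  simp [dot, pact]

lemma swap_conj {n : ℕ} (u : Perm (Fin n)) (i j : Fin n) (v : Perm (Fin n)) :
    u⁻¹ * (Equiv.swap i j * v) = Equiv.swap (u⁻¹ i) (u⁻¹ j) * (u⁻¹ * v) := by
  have : Equiv.swap (u⁻¹ i) (u⁻¹ j) = u⁻¹ * Equiv.swap i j * u := by
    have := Equiv.swap_apply_apply u⁻¹ i j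
    simpa using this
  rw [this]; group

lemma dot_gkm {n : ℕ} (h : Fin n → Fin n) (u : Perm (Fin n)) (p : Perm (Fin n) → Pol n)
    (hp : GKMh n h p) : GKMh n h (dot u p) := by
  intro v i j hij hcond
  have hij' : i ≠ j := ne_of_lt hij
  have hab : u⁻¹ i ≠ u⁻¹ j := fun e => hij' (u⁻¹.injective e)
  have hcond' : ∀ x : Fin n, (u⁻¹ * v)⁻¹ (u⁻¹ x) = v⁻¹ x := by
    intro x; simp [mul_inv_rev, Equiv.Perm.mul_apply]
  have key : u⁻¹ * (Equiv.swap i j * v) = Equiv.swap (u⁻¹ i) (u⁻¹ j) * (u⁻¹ * v) :=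
    swap_conj u i j v
  have hdiff : dot u p v - dot u p (Equiv.swap i j * v)
      = pact u (p (u⁻¹ * v) - p (Equiv.swap (u⁻¹ i) (u⁻¹ j) * (u⁻¹ * v))) := by
    simp [dot, pact, key, map_sub]
  rcases hab.lt_or_gt with hlt | hlt
  · have d := hp (u⁻¹ * v) (u⁻¹ i) (u⁻¹ j) hlt (by
      rw [hcond' i, hcond' j]; exact hcond)
    have d2 := map_dvd (rename (R := ℂ) ⇑u) d
    rw [hdiff]
    simpa [pact, map_sub] using d2
  · have d := hp (u⁻¹ * v) (u⁻¹ j) (u⁻¹ i) hlt (by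
      rw [hcond' i, hcond' j, max_comm, min_comm]; exact hcond)
    rw [Equiv.swap_comm] at d
    have d2 := map_dvd (rename (R := ℂ) ⇑u) d
    simp only [pact, map_sub, rename_X, (Equiv.apply_symm_apply u : ∀ x, u (u⁻¹ x) = x)] at d2
    rw [hdiff]
    have : (X i - X j : Pol n) = -(X j - X i) := by ring
    rw [this, neg_dvd]
    simpa [pact, map_sub] using d2

/-- for a Hessenberg function `h`, the Hessenberg GKM ring `R_h` is a
`ℂ[t₁,…,tₙ]`-subalgebra of the product ring (contains the diagonal scalars and is closed
under addition and multiplication), the dot action preserves `R_h`, and it acts by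
twisted `ℂ[t₁,…,tₙ]`-algebra automorphisms, giving a left action of `Sₙ` on `R_h`. -/
theorem hessenberg_dot_action (n : ℕ) (hn : 1 ≤ n)
    (h : Fin n → Fin n) (hmono : Monotone h) (hup : ∀ i, i ≤ h i) :
    (∀ c : Pol n, GKMh n h (fun _ => c)) ∧
    (∀ p q, GKMh n h p → GKMh n h q → GKMh n h (p + q)) ∧
    (∀ p q, GKMh n h p → GKMh n h q → GKMh n h (p * q)) ∧
    (∀ (u : Perm (Fin n)) (p), GKMh n h p → GKMh n h (dot u p)) ∧
    (∀ (u : Perm (Fin n)) (p q : Perm (Fin n) → Pol n),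
      dot u (p + q) = dot u p + dot u q) ∧
    (∀ (u : Perm (Fin n)) (p q : Perm (Fin n) → Pol n),
      dot u (p * q) = dot u p * dot u q) ∧
    (∀ (u : Perm (Fin n)) (c : Pol n) (p : Perm (Fin n) → Pol n),
      dot u (c • p) = pact u c • dot u p) ∧
    (∀ (u : Perm (Fin n)) (q), GKMh n h q → ∃! p, GKMh n h p ∧ dot u p = q) ∧
    (∀ (u w : Perm (Fin n)) (p : Perm (Fin n) → Pol n),
      dot u (dot w p) = dot (u * w) p) := by
  refine ⟨?_, ?_, ?_, fun u p hp => dot_gkm h u p hp, ?_, ?_, ?_, ?_, dot_dot⟩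
  · intro c v i j hij hc; simp
  · intro p q hp hq v i j hij hc
    have := dvd_add (hp v i j hij hc) (hq v i j hij hc)
    simpa [Pi.add_apply, add_sub_add_comm] using this
  · intro p q hp hq v i j hij hc
    have hd := dvd_add ((hq v i j hij hc).mul_left (p v))
      ((hp v i j hij hc).mul_right (q (Equiv.swap i j * v)))
    have e : p v * (q v - q (Equiv.swap i j * v))
        + (p v - p (Equiv.swap i j * v)) * q (Equiv.swap i j * v)
        = p v * q v - p (Equiv.swap i j * v) * q (Equiv.swap i j * v) := by ring
    rw [e] at hd
    simpa [Pi.mul_apply] using hd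
  · intro u p q; funext v; simp [dot, pact, map_add]
  · intro u p q; funext v; simp [dot, pact, map_mul]
  · intro u c p; funext v
    simp [dot, pact, Pi.smul_apply, smul_eq_mul, map_mul]
  · intro u q hq
    refine ⟨dot u⁻¹ q, ⟨dot_gkm h u⁻¹ q hq, by rw [dot_dot, mul_inv_cancel, dot_one]⟩, ?_⟩
    rintro p ⟨-, rfl⟩
    rw [dot_dot, inv_mul_cancel, dot_one]
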